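/- For the action of G = Z/2 × Z/2 on A: ω₁ and ω₄ are fixed points of the G-action; g₃.ωᵢ = ωᵢ for all i = 1,2,3,4; g₂.ω₂ = ω₃; and G acts simply transitively on the set {η₁, η₂, η₃, η₄}: setting η_{gᵢ} := ηᵢ, one has gᵢ.η_{g_j} = η_{gᵢg_j} for all i, j. -/
import Mathlib


open TensorProduct

/-- The defining relations of the second example: `x⁴ = 1`, `xy = yx³`, and
`y² = (1/2)(ζ + x - ζx² + x³)`. -/
inductive SecondRel (K : Type*) [Field K] (ζ : K) :
    FreeAlgebra K (Fin 2) → FreeAlgebra K (Fin 2) → Prop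
  | x_pow_four : SecondRel K ζ (FreeAlgebra.ι K 0 ^ 4) 1
  | x_mul_y : SecondRel K ζ (FreeAlgebra.ι K 0 * FreeAlgebra.ι K 1)
      (FreeAlgebra.ι K 1 * FreeAlgebra.ι K 0 ^ 3)
  | y_sq : SecondRel K ζ (FreeAlgebra.ι K 1 ^ 2)
      ((2 : K)⁻¹ • (ζ • (1 : FreeAlgebra K (Fin 2)) + FreeAlgebra.ι K 0
        - ζ • (FreeAlgebra.ι K 0 ^ 2) + FreeAlgebra.ι K 0 ^ 3))

/-- The second example: the `K`-algebra generated by noncommuting elements `x`, `y`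
subject to `x⁴ = 1`, `xy = yx³` and `y² = (1/2)(ζ + x - ζx² + x³)`. -/
abbrev SecondAlg (K : Type*) [Field K] (ζ : K) : Type _ := RingQuot (SecondRel K ζ)

/-- The generator `x` of the second example. -/
noncomputable def xS (K : Type*) [Field K] (ζ : K) : SecondAlg K ζ :=
  RingQuot.mkAlgHom K (SecondRel K ζ) (FreeAlgebra.ι K 0)

/-- The generator `y` of the second example. -/
noncomputable def yS (K : Type*) [Field K] (ζ : K) : SecondAlg K ζ :=
  RingQuot.mkAlgHom K (SecondRel K ζ) (FreeAlgebra.ι K 1)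

/-- The group `G = ℤ/2 × ℤ/2`, written multiplicatively. -/
abbrev GG : Type := Multiplicative (ZMod 2 × ZMod 2)

/-- `g₁ = (0,0)`. -/
def g1 : GG := Multiplicative.ofAdd (0, 0)
/-- `g₂ = (1,0)`. -/
def g2 : GG := Multiplicative.ofAdd (1, 0)
/-- `g₃ = (0,1)`. -/
def g3 : GG := Multiplicative.ofAdd (0, 1)
/-- `g₄ = (1,1)`. -/
def g4 : GG := Multiplicative.ofAdd (1, 1)

/-- The twisted multiplication of `A ⊗̂ A`:
`(a ⊗ b)(a' ⊗ b') = (1/4) ∑_{g,g'} θ(g,g') (a (g.a')) ⊗ ((g'.b) b')`,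
extended bilinearly. -/
noncomputable def twMul {K : Type*} [Field K] {B : Type*} [Ring B] [Algebra K B]
    {G : Type*} [Monoid G] [Fintype G]
    (ρ : G →* (B →ₐ[K] B)) (θ : G → G → K)
    (z w : B ⊗[K] B) : B ⊗[K] B :=
  (4 : K)⁻¹ • ∑ g : G, ∑ g' : G, θ g g' •
    (TensorProduct.map (LinearMap.mul' K B) (LinearMap.mul' K B))
      ((TensorProduct.tensorTensorTensorComm K B B B B)
        ((TensorProduct.map
            (TensorProduct.map LinearMap.id (ρ g').toLinearMap)
            (TensorProduct.map (ρ g).toLinearMap LinearMap.id))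
          (z ⊗ₜ[K] w)))

/-- `ω₁ := 1`. -/
noncomputable def w1S (K : Type*) [Field K] (ζ : K) : SecondAlg K ζ := 1

/-- `ω₂ := (1/2)(1 + ιζ²)x + (1/2)(1 - ιζ²)x³`. -/
noncomputable def w2S (K : Type*) [Field K] (i ζ : K) : SecondAlg K ζ :=
  ((2 : K)⁻¹ * (1 + i * ζ ^ 2)) • xS K ζ +
    ((2 : K)⁻¹ * (1 - i * ζ ^ 2)) • (xS K ζ ^ 3)

/-- `ω₃ := (1/2)(1 - ιζ²)x + (1/2)(1 + ιζ²)x³`. -/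
noncomputable def w3S (K : Type*) [Field K] (i ζ : K) : SecondAlg K ζ :=
  ((2 : K)⁻¹ * (1 - i * ζ ^ 2)) • xS K ζ +
    ((2 : K)⁻¹ * (1 + i * ζ ^ 2)) • (xS K ζ ^ 3)

/-- `ω₄ := x²`. -/
noncomputable def w4S (K : Type*) [Field K] (ζ : K) : SecondAlg K ζ := xS K ζ ^ 2

/-- `η₁ := y`. -/
noncomputable def e1S (K : Type*) [Field K] (ζ : K) : SecondAlg K ζ := yS K ζ

/-- `η₂ := x³y`. -/
noncomputable def e2S (K : Type*) [Field K] (ζ : K) : SecondAlg K ζ := xS K ζ ^ 3 * yS K ζ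

/-- `η₃ := x²y`. -/
noncomputable def e3S (K : Type*) [Field K] (ζ : K) : SecondAlg K ζ := xS K ζ ^ 2 * yS K ζ

/-- `η₄ := xy`. -/
noncomputable def e4S (K : Type*) [Field K] (ζ : K) : SecondAlg K ζ := xS K ζ * yS K ζ

theorem stmt_15 {K : Type*} [Field K] (ι : K) (hι : IsPrimitiveRoot ι 4)
    (ζ : K) (hζ : ζ ^ 4 = 1)
    (ρ : GG →* (SecondAlg K ζ →ₐ[K] SecondAlg K ζ))
    (hρ2x : ρ g2 (xS K ζ) = xS K ζ ^ 3) (hρ2y : ρ g2 (yS K ζ) = xS K ζ ^ 3 * yS K ζ)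
    (hρ3x : ρ g3 (xS K ζ) = xS K ζ) (hρ3y : ρ g3 (yS K ζ) = xS K ζ ^ 2 * yS K ζ) :
    -- `ω₁` and `ω₄` are fixed points of the `G`-action
    (∀ g : GG, ρ g (w1S K ζ) = w1S K ζ ∧ ρ g (w4S K ζ) = w4S K ζ) ∧
    -- `g₃.ωᵢ = ωᵢ` for all `i`
    (ρ g3 (w1S K ζ) = w1S K ζ ∧ ρ g3 (w2S K ι ζ) = w2S K ι ζ ∧
      ρ g3 (w3S K ι ζ) = w3S K ι ζ ∧ ρ g3 (w4S K ζ) = w4S K ζ) ∧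
    -- `g₂.ω₂ = ω₃`
    ρ g2 (w2S K ι ζ) = w3S K ι ζ ∧
    -- `G` acts simply transitively on `{η₁, η₂, η₃, η₄}`
    (∀ η : GG → SecondAlg K ζ,
      (η g1 = e1S K ζ ∧ η g2 = e2S K ζ ∧ η g3 = e3S K ζ ∧ η g4 = e4S K ζ) →
      ∀ i j : GG, ρ i (η j) = η (i * j)) := by
  have hx4 : xS K ζ ^ 4 = 1 := by
    have h := RingQuot.mkAlgHom_rel K (SecondRel.x_pow_four (K := K) (ζ := ζ))
    simpa [xS, map_pow] using h
  have hxx : xS K ζ * (xS K ζ * (xS K ζ * xS K ζ)) = 1 := by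
    rw [pow_succ, pow_succ, pow_succ, pow_one] at hx4
    simpa [mul_assoc] using hx4
  have hxa : ∀ a : SecondAlg K ζ,
      xS K ζ * (xS K ζ * (xS K ζ * (xS K ζ * a))) = a := by
    intro a
    calc xS K ζ * (xS K ζ * (xS K ζ * (xS K ζ * a)))
        = (xS K ζ * (xS K ζ * (xS K ζ * xS K ζ))) * a := by simp [mul_assoc]
      _ = a := by rw [hxx, one_mul]
  have hg1 : ∀ a, ρ g1 a = a := by
    have h1 : g1 = (1 : GG) := by decide
    intro a; rw [h1, map_one]; rfl
  have hg4 : ∀ a, ρ g4 a = ρ g2 (ρ g3 a) := by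
    have h : g4 = g2 * g3 := by decide
    intro a; rw [h, map_mul]; rfl
  have hcase : ∀ g : GG, g = g1 ∨ g = g2 ∨ g = g3 ∨ g = g4 := by decide
  have hx9 : (xS K ζ ^ 3) ^ 3 = xS K ζ := by
    simp only [pow_succ, pow_zero, one_mul, mul_assoc, hxa]
  have R2_1 : ρ g2 (e1S K ζ) = e2S K ζ := by rw [e1S, e2S, hρ2y]
  have R2_2 : ρ g2 (e2S K ζ) = e1S K ζ := by
    rw [e2S, e1S, map_mul, map_pow, hρ2x, hρ2y]
    simp only [pow_succ, pow_zero, one_mul, mul_assoc, hxa]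
  have R2_3 : ρ g2 (e3S K ζ) = e4S K ζ := by
    rw [e3S, e4S, map_mul, map_pow, hρ2x, hρ2y]
    simp only [pow_succ, pow_zero, one_mul, mul_assoc, hxa]
  have R2_4 : ρ g2 (e4S K ζ) = e3S K ζ := by
    rw [e4S, e3S, map_mul, hρ2x, hρ2y]
    simp only [pow_succ, pow_zero, one_mul, mul_assoc, hxa]
  have R3_1 : ρ g3 (e1S K ζ) = e3S K ζ := by rw [e1S, e3S, hρ3y]
  have R3_2 : ρ g3 (e2S K ζ) = e4S K ζ := by
    rw [e2S, e4S, map_mul, map_pow, hρ3x, hρ3y]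
    simp only [pow_succ, pow_zero, one_mul, mul_assoc, hxa]
  have R3_3 : ρ g3 (e3S K ζ) = e1S K ζ := by
    rw [e3S, e1S, map_mul, map_pow, hρ3x, hρ3y]
    simp only [pow_succ, pow_zero, one_mul, mul_assoc, hxa]
  have R3_4 : ρ g3 (e4S K ζ) = e2S K ζ := by
    rw [e4S, e2S, map_mul, hρ3x, hρ3y]
    simp only [pow_succ, pow_zero, one_mul, mul_assoc, hxa]
  have hw1 : ∀ g : GG, ρ g (w1S K ζ) = w1S K ζ := by
    intro g; rw [w1S, map_one]
  have R2_w4 : ρ g2 (w4S K ζ) = w4S K ζ := by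
    rw [w4S, map_pow, hρ2x]
    simp only [pow_succ, pow_zero, one_mul, mul_assoc, hxa]
  have R3_w4 : ρ g3 (w4S K ζ) = w4S K ζ := by rw [w4S, map_pow, hρ3x]
  have hw4 : ∀ g : GG, ρ g (w4S K ζ) = w4S K ζ := by
    intro g; rcases hcase g with h | h | h | h <;> subst h
    · exact hg1 _
    · exact R2_w4
    · exact R3_w4
    · rw [hg4, R3_w4, R2_w4]
  have R3_w2 : ρ g3 (w2S K ι ζ) = w2S K ι ζ := by
    simp only [w2S, map_add, map_smul, map_pow, hρ3x]
  have R3_w3 : ρ g3 (w3S K ι ζ) = w3S K ι ζ := by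
    simp only [w3S, map_add, map_smul, map_pow, hρ3x]
  have R2_w2 : ρ g2 (w2S K ι ζ) = w3S K ι ζ := by
    simp only [w2S, w3S, map_add, map_smul, map_pow, hρ2x, hx9]
    rw [add_comm]
  refine ⟨fun g => ⟨hw1 g, hw4 g⟩, ⟨hw1 g3, R3_w2, R3_w3, R3_w4⟩, R2_w2, ?_⟩
  rintro η ⟨h1, h2, h3, h4⟩ i j
  rcases hcase i with hi | hi | hi | hi <;> rcases hcase j with hj | hj | hj | hj <;>
    subst hi <;> subst hj
  · rw [show g1 * g1 = g1 from by decide]; exact hg1 _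
  · rw [show g1 * g2 = g2 from by decide]; exact hg1 _
  · rw [show g1 * g3 = g3 from by decide]; exact hg1 _
  · rw [show g1 * g4 = g4 from by decide]; exact hg1 _
  · rw [h1, show g2 * g1 = g2 from by decide, h2]; exact R2_1
  · rw [h2, show g2 * g2 = g1 from by decide, h1]; exact R2_2
  · rw [h3, show g2 * g3 = g4 from by decide, h4]; exact R2_3
  · rw [h4, show g2 * g4 = g3 from by decide, h3]; exact R2_4
  · rw [h1, show g3 * g1 = g3 from by decide, h3]; exact R3_1
  · rw [h2, show g3 * g2 = g4 from by decide, h4]; exact R3_2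
  · rw [h3, show g3 * g3 = g1 from by decide, h1]; exact R3_3
  · rw [h4, show g3 * g4 = g2 from by decide, h2]; exact R3_4
  · rw [hg4, h1, R3_1, R2_3, show g4 * g1 = g4 from by decide, h4]
  · rw [hg4, h2, R3_2, R2_4, show g4 * g2 = g3 from by decide, h3]
  · rw [hg4, h3, R3_3, R2_1, show g4 * g3 = g2 from by decide, h2]
  · rw [hg4, h4, R3_4, R2_2, show g4 * g4 = g1 from by decide, h1]
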